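/- Let A be an abelian category, K an object, and ξᵢ : 0 → Kᵢ → Xᵢ →^{αᵢ} Y → 0 (i = 1, 2) short exact sequences with K₂ ∈ add K. If Im c(ξ₂, K) ⊆ Im c(ξ₁, K) as Γ(K)-submodules of Ext¹(Y, K), then there exists a morphism u : K₁ → K₂ with [ξ₂] = [u.ξ₁]; equivalently, α₂ factors through α₁. -/

import Mathlib

set_option linter.unusedSectionVars false

open CategoryTheory Abelian Limits

universe w v u

attribute [local instance] CategoryTheory.Abelian.hasFiniteBiproducts

variable {A : Type u} [Category.{v} A] [Abelian A]

/-- `M` belongs to `add K`: it is a direct summand of a finite direct sum of copies of `K`. -/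
def InAdd (K M : A) : Prop :=
  ∃ (n : ℕ) (s : M ⟶ ⨁ (fun _ : Fin n => K)) (r : (⨁ fun _ : Fin n => K) ⟶ M),
    s ≫ r = 𝟙 M

/-- `α` factors through `α'`. -/
def Factors {X X' Y : A} (α : X ⟶ Y) (α' : X' ⟶ Y) : Prop :=
  ∃ v : X ⟶ X', v ≫ α' = α

/-- `α` and `α'` are right equivalent. -/
def RightEquiv {X X' Y : A} (α : X ⟶ Y) (α' : X' ⟶ Y) : Prop :=
  Factors α α' ∧ Factors α' α

/-- A morphism is right minimal. -/
def RightMinimal {X Y : A} (α : X ⟶ Y) : Prop :=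
  ∀ v : X ⟶ X, v ≫ α = α → IsIso v

/-- A short exact sequence `0 → K → X → Y → 0`. -/
structure SES (K Y : A) where
  X : A
  i : K ⟶ X
  p : X ⟶ Y
  zero : i ≫ p = 0
  shortExact : (ShortComplex.mk i p zero).ShortExact

variable [HasExt.{w} A]

lemma Ext.mk₀_add' {X Y : A} (f g : X ⟶ Y) :
    Ext.mk₀ (f + g) = Ext.mk₀ f + Ext.mk₀ g := by
  letI := HasDerivedCategory.standard A
  apply Ext.ext
  simp [Ext.add_hom, ShiftedHom.mk₀, Functor.map_add]

/-- The class `[ξ] ∈ Ext¹(Y, K)` of a short exact sequence `ξ`. -/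
noncomputable def SES.cls {K Y : A} (E : SES K Y) : Ext Y K 1 :=
  E.shortExact.extClass

/-- The class `[u.ξ]` of the pushout of `ξ` along `u`. -/
noncomputable def SES.push {K Y Z : A} (E : SES K Y) (u : K ⟶ Z) : Ext Y Z 1 :=
  E.cls.comp (Ext.mk₀ u) (add_zero 1)

noncomputable instance extSMulEnd (Y K : A) : SMul (End K) (Ext Y K 1) :=
  ⟨fun g e => e.comp (Ext.mk₀ g) (add_zero 1)⟩

lemma extSmul_def {Y K : A} (g : End K) (e : Ext Y K 1) :
    g • e = e.comp (Ext.mk₀ g) (add_zero 1) := rfl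

/-- `Ext¹(Y, K)` as a left module over `Γ(K) = End K`, via pushout. -/
noncomputable instance extModuleEnd (Y K : A) : Module (End K) (Ext Y K 1) where
  one_smul e := by rw [extSmul_def]; exact Ext.comp_mk₀_id e
  mul_smul g h e := by
    rw [extSmul_def, extSmul_def, extSmul_def,
      Ext.comp_assoc_of_third_deg_zero, Ext.mk₀_comp_mk₀]
    rfl
  smul_add g e f := by
    rw [extSmul_def, extSmul_def, extSmul_def]; exact Ext.add_comp e f _ _
  add_smul g h e := by
    rw [extSmul_def, extSmul_def, extSmul_def, Ext.mk₀_add', Ext.comp_add]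
  zero_smul e := by rw [extSmul_def]; rw [Ext.mk₀_zero, Ext.comp_zero]
  smul_zero g := by rw [extSmul_def]; exact Ext.zero_comp _ _ _ _ _

/-- The connecting map `c(ξ, K) : Hom(K₁, K) → Ext¹(Y, K)`, `u ↦ [u.ξ]`,
as a morphism of left `Γ(K) = End K`-modules. -/
noncomputable def SES.conn {K₁ Y : A} (E : SES K₁ Y) (K : A) :
    (K₁ ⟶ K) →ₗ[End K] Ext Y K 1 where
  toFun u := E.push u
  map_add' u v := by
    dsimp [SES.push]
    rw [Ext.mk₀_add', Ext.comp_add]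
  map_smul' g u := by
    dsimp [SES.push]
    rw [End.smul_right, extSmul_def, Ext.comp_assoc_of_third_deg_zero,
      Ext.mk₀_comp_mk₀]

/-- Right minimality for a morphism of modules. -/
def ModRightMinimal {R : Type*} [Ring R] {M N : Type*} [AddCommGroup M] [AddCommGroup N]
    [Module R M] [Module R N] (c : M →ₗ[R] N) : Prop :=
  ∀ g : M →ₗ[R] M, c.comp g = c → Function.Bijective g

universe w'

/-- The `R`-module `M` admits a projective cover. -/
def HasProjCover (R : Type*) [Ring R] (M : Type w') [AddCommGroup M] [Module R M] : Prop :=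
  ∃ (P : Type w') (_ : AddCommGroup P) (_ : Module R P) (f : P →ₗ[R] M),
    Module.Projective R P ∧ Function.Surjective f ∧ ModRightMinimal f

/-- `ξ` is a universal `L`-extension of `Y` by `K`. -/
def IsUniversalExt (K : A) {K₁ Y : A} (E : SES K₁ Y) (L : Submodule (End K) (Ext Y K 1)) :
    Prop :=
  InAdd K K₁ ∧ LinearMap.range (E.conn K) = L ∧ ModRightMinimal (E.conn K)

lemma InAdd.self (K : A) : InAdd K K := by
  refine ⟨1, biproduct.ι (fun _ : Fin 1 => K) (0 : Fin 1), biproduct.π (fun _ : Fin 1 => K) 0, ?_⟩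
  simp

/-- if `K₂ ∈ add K` and `Im c(ξ₂, K) ⊆ Im c(ξ₁, K)`, then there exists
`u : K₁ ⟶ K₂` with `[ξ₂] = [u.ξ₁]`; equivalently `α₂` factors through `α₁` in the sense
that `α₁` factors through `α₂`. -/
theorem stmt2 {K K₁ K₂ Y : A} (E₁ : SES K₁ Y) (E₂ : SES K₂ Y) (h : InAdd K K₂)
    (hle : LinearMap.range (E₂.conn K) ≤ LinearMap.range (E₁.conn K)) :
    ∃ u : K₁ ⟶ K₂, E₂.cls = E₁.push u := by
  obtain ⟨n, s, r, hsr⟩ := h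
  choose u hu using fun j : Fin n =>
    hle (⟨s ≫ biproduct.π _ j, rfl⟩ : (E₂.conn K) (s ≫ biproduct.π _ j) ∈
      LinearMap.range (E₂.conn K))
  refine ⟨(∑ j, u j ≫ biproduct.ι (fun _ : Fin n => K) j) ≫ r, ?_⟩
  classical
  have hmk : ∀ {X Z : A} (φ : Fin n → (X ⟶ Z)) (t : Finset (Fin n)),
      Ext.mk₀ (∑ j ∈ t, φ j) = ∑ j ∈ t, Ext.mk₀ (φ j) := by
    intro X Z φ t
    induction t using Finset.induction with
    | empty => simp only [Finset.sum_empty]; exact Ext.mk₀_zero X Z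
    | insert _ _ hj ih =>
        rw [Finset.sum_insert hj, Finset.sum_insert hj, Ext.mk₀_add', ih]
  have hcomp : ∀ {X : A} (e : Ext Y X 1) (φ : Fin n → Ext X K₂ 0) (t : Finset (Fin n)),
      e.comp (∑ j ∈ t, φ j) (add_zero 1) = ∑ j ∈ t, e.comp (φ j) (add_zero 1) := by
    intro X e φ t
    induction t using Finset.induction with
    | empty => simp only [Finset.sum_empty]; exact Ext.comp_zero e _ _ _ (add_zero 1)
    | insert _ _ hj ih =>
        rw [Finset.sum_insert hj, Finset.sum_insert hj, Ext.comp_add, ih]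
  have key : ∀ j : Fin n,
      E₁.cls.comp (Ext.mk₀ (u j ≫ biproduct.ι (fun _ : Fin n => K) j ≫ r)) (add_zero 1)
        = E₂.cls.comp (Ext.mk₀ (s ≫ biproduct.π (fun _ : Fin n => K) j ≫
            biproduct.ι (fun _ : Fin n => K) j ≫ r)) (add_zero 1) := by
    intro j
    rw [← Ext.mk₀_comp_mk₀ (u j), ← Ext.comp_assoc_of_third_deg_zero]
    have : E₁.cls.comp (Ext.mk₀ (u j)) (add_zero 1)
        = E₂.cls.comp (Ext.mk₀ (s ≫ biproduct.π (fun _ : Fin n => K) j)) (add_zero 1) :=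
      hu j
    rw [this, Ext.comp_assoc_of_third_deg_zero, Ext.mk₀_comp_mk₀]
    congr 2
    simp
  have htotal : (∑ j : Fin n, s ≫ biproduct.π (fun _ : Fin n => K) j ≫
      biproduct.ι (fun _ : Fin n => K) j ≫ r) = 𝟙 K₂ := by
    have := biproduct.total (f := fun _ : Fin n => K)
    calc (∑ j : Fin n, s ≫ biproduct.π (fun _ : Fin n => K) j ≫
        biproduct.ι (fun _ : Fin n => K) j ≫ r)
        = s ≫ (∑ j : Fin n, biproduct.π (fun _ : Fin n => K) j ≫
            biproduct.ι (fun _ : Fin n => K) j) ≫ r := by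
          rw [Preadditive.sum_comp, Preadditive.comp_sum]; simp
      _ = 𝟙 K₂ := by rw [this]; simpa using hsr
  symm
  show E₁.cls.comp (Ext.mk₀ _) (add_zero 1) = E₂.cls
  calc E₁.cls.comp (Ext.mk₀ ((∑ j, u j ≫ biproduct.ι (fun _ : Fin n => K) j) ≫ r))
        (add_zero 1)
      = ∑ j : Fin n, E₁.cls.comp
          (Ext.mk₀ (u j ≫ biproduct.ι (fun _ : Fin n => K) j ≫ r)) (add_zero 1) := by
        rw [Preadditive.sum_comp]
        simp only [Category.assoc]
        rw [hmk, hcomp]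
    _ = ∑ j : Fin n, E₂.cls.comp
          (Ext.mk₀ (s ≫ biproduct.π (fun _ : Fin n => K) j ≫
            biproduct.ι (fun _ : Fin n => K) j ≫ r)) (add_zero 1) := by
        exact Finset.sum_congr rfl fun j _ => key j
    _ = E₂.cls := by
        rw [← hcomp, ← hmk, htotal]
        exact Ext.comp_mk₀_id E₂.cls
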